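/- Let G be a finite graph and L a linear order on V(G) with elimination width at most k (i.e., the fill-in graph G_L has clique number at most k+1). Then for every r ∈ ℕ and every vertex v, |WReach_r[G,L,v]| ≤ C(r+k, k), the binomial coefficient. -/

import Mathlib

open SimpleGraph

variable {V : Type} [Fintype V]

/-- `u` is strongly reachable (any length) from `v`: a path from `v` to `u`
whose internal vertices are all strictly greater than `v`. -/
def StrongRel (G : SimpleGraph V) (L : LinearOrder V) (v u : V) : Prop :=
  ∃ p : G.Walk v u, p.IsPath ∧ ∀ x ∈ p.support, x ≠ u → x ≠ v → L.lt v x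

/-- The fill-in of `G` with respect to a linear order `L`. -/
def fillIn (G : SimpleGraph V) (L : LinearOrder V) : SimpleGraph V where
  Adj u w := u ≠ w ∧ ((L.lt u w ∧ StrongRel G L w u) ∨ (L.lt w u ∧ StrongRel G L u w))
  symm := by constructor; intro u w h; exact ⟨h.1.symm, h.2.symm⟩
  loopless := by constructor; intro u h; exact h.1 rfl

/-- The set of vertices weakly `r`-reachable from `v` with respect to `L`. -/
def WReach (G : SimpleGraph V) (L : LinearOrder V) (r : ℕ) (v : V) : Set V :=
  {u | ∃ p : G.Walk v u, p.IsPath ∧ p.length ≤ r ∧ ∀ w ∈ p.support, L.le u w}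

section AuxAbstract

set_option linter.unusedVariables false
set_option linter.unusedSectionVars false

variable {W : Type*} [LinearOrder W]

/-- Decreasing chains through a back-neighbourhood system `N`. -/
inductive NReach (N : W → Finset W) : ℕ → W → W → Prop
  | refl (v : W) : NReach N 0 v v
  | step {s : ℕ} {v w u : W} : w ∈ N v → NReach N s w u → NReach N (s + 1) v u

/-- Chains annotated with the "bottom rank" of each step. -/
inductive NFollows (N : W → Finset W) : W → List ℕ → W → Prop
  | nil (v : W) : NFollows N v [] v
  | cons {v w u : W} {t : ℕ} {ts : List ℕ} (hw : w ∈ N v)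
      (ht : t = ((N v).filter (fun z => z < w)).card) (h : NFollows N w ts u) :
      NFollows N v (t :: ts) u

/-- Follow a list of bottom-ranks deterministically. -/
def followL (N : W → Finset W) : W → List ℕ → W
  | v, [] => v
  | v, t :: ts => followL N (((N v).sort (· ≤ ·)).getD t v) ts

/-- Base-`B` value of a list of digits (each digit `t` contributes `t+1`). -/
def Mw (B : ℕ) : List ℕ → ℕ
  | [] => 0
  | t :: ts => (t + 1) * B ^ ts.length + Mw B ts

theorem rank_eq_inj {N : W → Finset W} {v w w' : W} (hw : w ∈ N v) (hw' : w' ∈ N v)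
    (h : ((N v).filter (fun z => z < w)).card = ((N v).filter (fun z => z < w')).card) :
    w = w' := by
  rcases lt_trichotomy w w' with h1 | h1 | h1
  · exfalso
    have hss : (N v).filter (fun z => z < w) ⊂ (N v).filter (fun z => z < w') := by
      constructor
      · intro z hz
        simp only [Finset.mem_filter] at hz ⊢
        exact ⟨hz.1, hz.2.trans h1⟩
      · intro hsub
        have := hsub (Finset.mem_filter.2 ⟨hw, h1⟩)
        simp only [Finset.mem_filter] at this
        exact lt_irrefl _ this.2
    exact absurd h (Nat.ne_of_lt (Finset.card_lt_card hss))
  · exact h1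
  · exfalso
    have hss : (N v).filter (fun z => z < w') ⊂ (N v).filter (fun z => z < w) := by
      constructor
      · intro z hz
        simp only [Finset.mem_filter] at hz ⊢
        exact ⟨hz.1, hz.2.trans h1⟩
      · intro hsub
        have := hsub (Finset.mem_filter.2 ⟨hw', h1⟩)
        simp only [Finset.mem_filter] at this
        exact lt_irrefl _ this.2
    exact absurd h.symm (Nat.ne_of_lt (Finset.card_lt_card hss))

theorem nreach_nfollows {N : W → Finset W} {s : ℕ} {v u : W} (h : NReach N s v u) :
    ∃ ts : List ℕ, ts.length = s ∧ NFollows N v ts u := by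
  induction h with
  | refl v => exact ⟨[], rfl, NFollows.nil v⟩
  | step hw h ih =>
    obtain ⟨ts, hlen, hf⟩ := ih
    exact ⟨_ :: ts, by simp [hlen], NFollows.cons hw rfl hf⟩

theorem nfollows_ranks_lt {N : W → Finset W} {k : ℕ} (h2 : ∀ x, (N x).card ≤ k)
    {v u : W} {ts : List ℕ} (h : NFollows N v ts u) : ∀ t ∈ ts, t < k := by
  induction h with
  | nil v => simp
  | cons hw ht h ih =>
    rename_i v w u t ts
    intro t' ht'
    rcases List.mem_cons.1 ht' with rfl | hmem
    · have hlt : ((N v).filter (fun z => z < w)).card < (N v).card := by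
        apply Finset.card_lt_card
        constructor
        · exact Finset.filter_subset _ _
        · intro hsub
          have := hsub hw
          simp only [Finset.mem_filter] at this
          exact lt_irrefl _ this.2
      have := h2 v
      omega
    · exact ih t' hmem

theorem Mw_lt_pow {B : ℕ} {ts : List ℕ} (h : ∀ t ∈ ts, t + 2 ≤ B) (hB : 1 ≤ B) :
    Mw B ts < B ^ ts.length := by
  induction ts with
  | nil => simp [Mw]
  | cons t ts ih =>
    have h1 : t + 2 ≤ B := h t List.mem_cons_self
    have h2 := ih (fun x hx => h x (List.mem_cons_of_mem _ hx))
    calc (t + 1) * B ^ ts.length + Mw B ts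
        < (t + 1) * B ^ ts.length + B ^ ts.length := by omega
      _ = (t + 2) * B ^ ts.length := by ring
      _ ≤ B * B ^ ts.length := Nat.mul_le_mul_right _ h1
      _ = B ^ (ts.length + 1) := by rw [pow_succ, mul_comm]

theorem pow_le_Mw {B : ℕ} {t : ℕ} {ts : List ℕ} : B ^ ts.length ≤ Mw B (t :: ts) := by
  have : 1 * B ^ ts.length ≤ (t + 1) * B ^ ts.length := Nat.mul_le_mul_right _ (by omega)
  simp only [Mw]; omega

theorem Mw_lt_of_length_lt {B : ℕ} {ts ts' : List ℕ} (h : ∀ t ∈ ts', t + 2 ≤ B)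
    (hB : 1 ≤ B) (hlen : ts'.length < ts.length) : Mw B ts' < Mw B ts := by
  cases ts with
  | nil => simp at hlen
  | cons t ts =>
    calc Mw B ts' < B ^ ts'.length := Mw_lt_pow h hB
      _ ≤ B ^ ts.length := Nat.pow_le_pow_right hB (by simp at hlen; omega)
      _ ≤ Mw B (t :: ts) := pow_le_Mw

theorem Mw_mono_tail {B : ℕ} {t : ℕ} {a b : List ℕ} (hB : 1 ≤ B) (hlen : a.length ≤ b.length)
    (hM : Mw B a ≤ Mw B b) : Mw B (t :: a) ≤ Mw B (t :: b) := by
  simp only [Mw]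
  have : B ^ a.length ≤ B ^ b.length := Nat.pow_le_pow_right hB hlen
  have := Nat.mul_le_mul_left (t + 1) this
  omega

theorem Mw_lt_of_head_lt {B : ℕ} {t₁ t : ℕ} {ts₁ ts₂ : List ℕ}
    (h : ∀ x ∈ ts₁, x + 2 ≤ B) (hB : 1 ≤ B) (ht : t₁ < t) (hlen : ts₁.length ≤ ts₂.length) :
    Mw B (t₁ :: ts₁) < Mw B (t :: ts₂) := by
  have h1 : Mw B ts₁ < B ^ ts₁.length := Mw_lt_pow h hB
  have h2 : B ^ ts₁.length ≤ B ^ ts₂.length := Nat.pow_le_pow_right hB hlen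
  calc Mw B (t₁ :: ts₁) = (t₁ + 1) * B ^ ts₁.length + Mw B ts₁ := rfl
    _ < (t₁ + 1) * B ^ ts₁.length + B ^ ts₁.length := by omega
    _ = (t₁ + 2) * B ^ ts₁.length := by ring
    _ ≤ (t + 1) * B ^ ts₂.length := Nat.mul_le_mul (by omega) h2
    _ ≤ Mw B (t :: ts₂) := by simp only [Mw]; omega

theorem nfollows_exchange {N : W → Finset W}
    (h3 : ∀ x y z, y ∈ N x → z ∈ N x → z < y → z ∈ N y)
    {v u : W} {t t' : ℕ} {ts : List ℕ}
    (h : NFollows N v (t :: t' :: ts) u) (hlt : t' < t) :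
    (∃ t₀, NFollows N v (t₀ :: ts) u) ∨
      (∃ t₁ t₂, t₁ < t ∧ NFollows N v (t₁ :: t₂ :: ts) u) := by
  rcases h with ⟨⟩ | ⟨hy, hty, h'⟩
  rename_i y
  rcases h' with ⟨⟩ | ⟨hw, htw, hrest⟩
  rename_i w
  -- S : elements of N v below y, all in N y
  have hS : ∀ z ∈ (N v).filter (fun z => z < y), z ∈ (N y).filter (fun z => z < y) := by
    intro z hz
    simp only [Finset.mem_filter] at hz ⊢
    exact ⟨h3 v y z hy hz.1 hz.2, hz.2⟩
  -- find z in S with w ≤ z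
  have hex : ∃ z ∈ (N v).filter (fun z => z < y), ¬ z < w := by
    by_contra hc
    push_neg at hc
    have hsub : (N v).filter (fun z => z < y) ⊆ (N y).filter (fun z => z < w) := by
      intro z hz
      have := hS z hz
      simp only [Finset.mem_filter] at hz this ⊢
      exact ⟨this.1, hc z (by simp only [Finset.mem_filter]; exact hz)⟩
    have := Finset.card_le_card hsub
    omega
  obtain ⟨z, hzS, hzw⟩ := hex
  simp only [Finset.mem_filter] at hzS
  obtain ⟨hzNv, hzy⟩ := hzS
  have hzNy : z ∈ N y := h3 v y z hy hzNv hzy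
  rcases eq_or_lt_of_le (not_lt.1 hzw) with rfl | hwz
  · -- w = z : shortcut
    exact Or.inl ⟨_, NFollows.cons hzNv rfl hrest⟩
  · -- w < z : reroute v → z → w
    have hwNz : w ∈ N z := h3 y z w hzNy hw hwz
    refine Or.inr ⟨((N v).filter (fun a => a < z)).card, ((N z).filter (fun a => a < w)).card,
      ?_, NFollows.cons hzNv rfl (NFollows.cons hwNz rfl hrest)⟩
    have hss : (N v).filter (fun a => a < z) ⊂ (N v).filter (fun a => a < y) := by
      constructor
      · intro a ha
        simp only [Finset.mem_filter] at ha ⊢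
        exact ⟨ha.1, ha.2.trans hzy⟩
      · intro hsub
        have := hsub (Finset.mem_filter.2 ⟨hzNv, hzy⟩)
        simp only [Finset.mem_filter] at this
        exact lt_irrefl _ this.2
    have := Finset.card_lt_card hss
    omega

theorem nfollows_sort {N : W → Finset W} {k : ℕ}
    (h2 : ∀ x, (N x).card ≤ k)
    (h3 : ∀ x y z, y ∈ N x → z ∈ N x → z < y → z ∈ N y) :
    ∀ (n : ℕ) (ts : List ℕ) (v u : W), Mw (k + 2) ts ≤ n → NFollows N v ts u →
      ∃ ts' : List ℕ, ts'.Pairwise (· ≤ ·) ∧ ts'.length ≤ ts.length ∧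
        Mw (k + 2) ts' ≤ Mw (k + 2) ts ∧ NFollows N v ts' u := by
  intro n
  induction n using Nat.strong_induction_on with
  | _ n IH =>
  intro ts v u hM hf
  set B := k + 2 with hB
  have hBpos : 1 ≤ B := by omega
  have hdig : ∀ (v' u' : W) (l : List ℕ), NFollows N v' l u' → ∀ t ∈ l, t + 2 ≤ B := by
    intro v' u' l hl t ht
    have := nfollows_ranks_lt h2 hl t ht
    omega
  rcases hf with ⟨⟩ | @⟨v2, w2, u2, t, rest, hw, ht, hrest⟩
  · exact ⟨[], by simp, by simp, le_refl _, NFollows.nil _⟩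
  -- recurse on the tail
  have hMrest : Mw B rest < Mw B (t :: rest) := by
    have : 1 * B ^ rest.length ≤ (t + 1) * B ^ rest.length := Nat.mul_le_mul_right _ (by omega)
    have hp : 0 < B ^ rest.length := Nat.pow_pos (by omega)
    simp only [Mw]; omega
  have hMn : Mw B rest ≤ n - 1 := by omega
  have hn1 : n - 1 < n := by
    have : 1 ≤ Mw B (t :: rest) := by
      have hp : 0 < B ^ rest.length := Nat.pow_pos (by omega)
      simp only [Mw]; nlinarith
    omega
  obtain ⟨rest', hsort', hlen', hM', hf'⟩ := IH (n - 1) hn1 rest w2 u hMn hrest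
  have hfull : NFollows N v (t :: rest') u := NFollows.cons hw ht hf'
  rcases rest' with _ | ⟨t', rest''⟩
  · refine ⟨[t], by simp, by simp, ?_, hfull⟩
    have hp : 1 ≤ B ^ rest.length := Nat.one_le_pow _ _ (by omega)
    have h2' : (t + 1) * 1 ≤ (t + 1) * B ^ rest.length := Nat.mul_le_mul_left _ hp
    simp only [Mw, List.length_nil, pow_zero]
    omega
  · by_cases hcmp : t ≤ t'
    · -- sorted!
      refine ⟨t :: t' :: rest'', ?_, by simpa using hlen', ?_, hfull⟩
      · rw [List.pairwise_cons]
        refine ⟨?_, hsort'⟩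
        intro b hb
        rcases List.mem_cons.1 hb with rfl | hb'
        · exact hcmp
        · exact hcmp.trans ((List.pairwise_cons.1 hsort').1 b hb')
      · exact Mw_mono_tail hBpos hlen' hM'
    · push_neg at hcmp
      rcases nfollows_exchange h3 hfull hcmp with ⟨t₀, hf₀⟩ | ⟨t₁, t₂, ht₁, hf₁⟩
      · have hMlt : Mw B (t₀ :: rest'') < Mw B (t :: t' :: rest'') :=
          Mw_lt_of_length_lt (hdig _ _ _ hf₀) hBpos (by simp)
        have hMle : Mw B (t :: t' :: rest'') ≤ Mw B (t :: rest) :=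
          Mw_mono_tail hBpos hlen' hM'
        obtain ⟨ts', hs, hl, hm, hf2⟩ := IH (n-1) hn1 (t₀ :: rest'') v u (by omega) hf₀
        refine ⟨ts', hs, ?_, by omega, hf2⟩
        simp at hl hlen' ⊢
        omega
      · have hMlt : Mw B (t₁ :: t₂ :: rest'') < Mw B (t :: t' :: rest'') := by
          exact Mw_lt_of_head_lt
            (fun x hx => hdig _ _ _ hf₁ x (List.mem_cons_of_mem _ hx)) hBpos ht₁ (by simp)
        have hMle : Mw B (t :: t' :: rest'') ≤ Mw B (t :: rest) :=
          Mw_mono_tail hBpos hlen' hM'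
        obtain ⟨ts', hs, hl, hm, hf2⟩ := IH (n-1) hn1 (t₁ :: t₂ :: rest'') v u (by omega) hf₁
        refine ⟨ts', hs, ?_, by omega, hf2⟩
        simp at hl hlen' ⊢
        omega

theorem getD_of_countP {l : List W} (hl : l.Pairwise (· < ·)) {w : W} (hw : w ∈ l) (d : W) :
    l.getD (l.countP (fun z => decide (z < w))) d = w := by
  induction l generalizing d with
  | nil => simp at hw
  | cons a l ih =>
    have hal : ∀ b ∈ l, a < b := (List.pairwise_cons.1 hl).1
    rcases List.mem_cons.1 hw with rfl | hw'
    · have hc : (w :: l).countP (fun z => decide (z < w)) = 0 := by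
        rw [List.countP_eq_zero]
        intro b hb
        rcases List.mem_cons.1 hb with rfl | hb'
        · simp
        · simpa using asymm (hal b hb')
      rw [hc]; rfl
    · have haw : a < w := hal w hw'
      have hc : (a :: l).countP (fun z => decide (z < w))
          = l.countP (fun z => decide (z < w)) + 1 := by
        rw [List.countP_cons]; simp [haw]
      rw [hc, List.getD_cons_succ]
      exact ih (List.pairwise_cons.1 hl).2 hw' d

theorem sort_getD_rank {s : Finset W} {w : W} (hw : w ∈ s) (d : W) :
    (s.sort (· ≤ ·)).getD ((s.filter (fun z => z < w)).card) d = w := by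
  have hsorted : (s.sort (· ≤ ·)).Pairwise (· < ·) := (Finset.sortedLT_sort s).pairwise
  have hmem : w ∈ s.sort (· ≤ ·) := (Finset.mem_sort _).2 hw
  have hcount : (s.filter (fun z => z < w)).card
      = (s.sort (· ≤ ·)).countP (fun z => decide (z < w)) := by
    have h := Finset.sort_eq s (· ≤ ·)
    calc (s.filter (fun z => z < w)).card
        = Multiset.card (Multiset.filter (fun z => z < w) s.val) := rfl
      _ = Multiset.card (Multiset.filter (fun z => z < w)
            ((s.sort (· ≤ ·) : List W) : Multiset W)) := by rw [h]
      _ = (s.sort (· ≤ ·)).countP (fun z => decide (z < w)) := by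
          rw [Multiset.filter_coe, Multiset.coe_card, List.countP_eq_length_filter]
  rw [hcount]
  exact getD_of_countP hsorted hmem d

theorem nfollows_followL {N : W → Finset W} {v u : W} {ts : List ℕ}
    (h : NFollows N v ts u) : followL N v ts = u := by
  induction h with
  | nil v => rfl
  | cons hw ht h ih =>
    rename_i v' w' u' t' ts'
    show followL N (((N v').sort (· ≤ ·)).getD t' v') ts' = u'
    rw [ht, sort_getD_rank hw]
    exact ih

theorem sorted_coe_sort {l : List ℕ} (hl : l.Pairwise (· ≤ ·)) :
    Multiset.sort (↑l : Multiset ℕ) (· ≤ ·) = l :=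
  List.Perm.eq_of_pairwise'
    (Multiset.pairwise_sort _ _) hl
    (Multiset.coe_eq_coe.1 (Multiset.sort_eq (↑l : Multiset ℕ) (· ≤ ·)))

theorem abstract_count (N : W → Finset W) (k : ℕ)
    (h2 : ∀ x, (N x).card ≤ k)
    (h3 : ∀ x y z, y ∈ N x → z ∈ N x → z < y → z ∈ N y) (r : ℕ) (v : W) :
    {u | ∃ s ≤ r, NReach N s v u}.ncard ≤ (r + k).choose k := by
  classical
  set decode : Sym (Fin (k + 1)) r → W := fun m =>
    followL N v ((((m.1.map Fin.val).filter (fun a => a ≠ 0)).sort (· ≤ ·)).map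
      (fun a => a - 1)) with hdecode
  set T : Finset W := (Finset.univ : Finset (Sym (Fin (k + 1)) r)).image decode with hT
  have hsub : {u | ∃ s ≤ r, NReach N s v u} ⊆ ↑T := by
    rintro u ⟨s, hs, hre⟩
    obtain ⟨ts0, hlen0, hf0⟩ := nreach_nfollows hre
    obtain ⟨ts, hsort, hlen, -, hf⟩ := nfollows_sort h2 h3 (Mw (k + 2) ts0) ts0 v u le_rfl hf0
    have hlenr : ts.length ≤ r := by omega
    have hranks : ∀ t ∈ ts, t < k := nfollows_ranks_lt h2 hf
    set g : ℕ → Fin (k + 1) := fun t => ⟨min (t + 1) k, by omega⟩ with hg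
    set m : Multiset (Fin (k + 1)) :=
      (↑(ts.map g) : Multiset (Fin (k + 1))) + Multiset.replicate (r - ts.length) 0 with hm
    have hcard : Multiset.card m = r := by
      simp [hm, Multiset.card_replicate]
      omega
    refine Finset.mem_coe.2 (Finset.mem_image.2 ⟨⟨m, hcard⟩, Finset.mem_univ _, ?_⟩)
    -- decode ⟨m, _⟩ = u
    have hmapval : m.map Fin.val
        = (↑(ts.map (fun t => t + 1)) : Multiset ℕ) + Multiset.replicate (r - ts.length) 0 := by
      have hlist : ts.map (Fin.val ∘ g) = ts.map (fun t => t + 1) :=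
        List.map_congr_left (fun t ht => by
          have := hranks t ht
          simp only [hg, Function.comp_apply]
          omega)
      simp only [hm, Multiset.map_add, Multiset.map_coe, Multiset.map_replicate, List.map_map,
        Fin.val_zero, hlist]
    have hfilter : (m.map Fin.val).filter (fun a => a ≠ 0)
        = (↑(ts.map (fun t => t + 1)) : Multiset ℕ) := by
      rw [hmapval, Multiset.filter_add]
      rw [Multiset.filter_eq_self.2, Multiset.filter_eq_nil.2, add_zero]
      · intro a ha
        rw [Multiset.eq_of_mem_replicate ha]
        simp
      · intro a ha
        rcases List.mem_map.1 (by exact_mod_cast ha) with ⟨t, -, rfl⟩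
        simp
    have hsorted1 : (ts.map (fun t => t + 1)).Pairwise (· ≤ ·) :=
      List.Pairwise.map _ (fun a b hab => by omega) hsort
    have hsort1 : ((m.map Fin.val).filter (fun a => a ≠ 0)).sort (· ≤ ·)
        = ts.map (fun t => t + 1) := by
      rw [hfilter, sorted_coe_sort hsorted1]
    show followL N v _ = u
    rw [hsort1, List.map_map]
    rw [List.map_congr_left (g := id) (fun t _ => by simp), List.map_id]
    exact nfollows_followL hf
  calc {u | ∃ s ≤ r, NReach N s v u}.ncard ≤ (↑T : Set W).ncard := by
        apply Set.ncard_le_ncard hsub (Set.toFinite _)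
    _ = T.card := Set.ncard_coe_finset _
    _ ≤ Fintype.card (Sym (Fin (k + 1)) r) := by
        rw [← Finset.card_univ]
        exact Finset.card_image_le
    _ = (Fintype.card (Fin (k + 1)) + r - 1).choose r := Sym.card_sym_eq_choose r
    _ = (r + k).choose k := by
        rw [Fintype.card_fin]
        have h1 : k + 1 + r - 1 = r + k := by omega
        rw [h1]
        exact Nat.choose_symm_add

end AuxAbstract

section AuxGraph

set_option linter.unusedVariables false
set_option linter.unusedSectionVars false

theorem strongRel_of_walk (G : SimpleGraph V) (L : LinearOrder V) {x y : V} (p : G.Walk x y)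
    (h : ∀ w ∈ p.support, w ≠ y → w ≠ x → L.lt x w) : StrongRel G L x y := by
  classical
  exact ⟨p.bypass, p.bypass_isPath, fun w hw => h w (p.support_bypass_subset hw)⟩

theorem strongRel_trans (G : SimpleGraph V) (L : LinearOrder V) {x y z : V}
    (hyx : L.lt y x) (hzy : L.lt z y)
    (hy : StrongRel G L x y) (hz : StrongRel G L x z) : StrongRel G L y z := by
  letI := L
  obtain ⟨p, -, hp⟩ := hy
  obtain ⟨q, -, hq⟩ := hz
  apply strongRel_of_walk G L (p.reverse.append q)
  intro w hw hwz hwy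
  rw [Walk.support_append] at hw
  rcases List.mem_append.1 hw with h | h
  · rw [Walk.support_reverse, List.mem_reverse] at h
    by_cases hwx : w = x
    · subst hwx; exact hyx
    · exact lt_trans hyx (hp w h hwy hwx)
  · have h' : w ∈ q.support := List.mem_of_mem_tail h
    by_cases hwx : w = x
    · subst hwx; exact hyx
    · exact lt_trans hyx (hq w h' hwz hwx)

theorem walk_to_nreach (G : SimpleGraph V) (L : LinearOrder V) (N : V → Finset V)
    (hN : ∀ x y, L.lt y x → StrongRel G L x y → y ∈ N x) :
    ∀ (n : ℕ) (v u : V) (p : G.Walk v u), p.length ≤ n →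
      (∀ w ∈ p.support, L.le u w) → ∃ s ≤ n, NReach N s v u := by
  letI := L
  intro n
  induction n using Nat.strong_induction_on with
  | _ n IH =>
  intro v u p hlen hmin
  by_cases hvu : v = u
  · subst hvu; exact ⟨0, Nat.zero_le _, NReach.refl v⟩
  have huv : u < v := lt_of_le_of_ne (hmin v p.start_mem_support) (fun h => hvu h.symm)
  have Q : ∀ (m : ℕ) (a : V) (p₂ : G.Walk a u), p₂.length ≤ m → (∀ w ∈ p₂.support, u ≤ w) →
      ∀ (q : G.Walk v a), 1 ≤ q.length → q.length + p₂.length ≤ n →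
      (∀ w ∈ q.support, w ≠ v → v < w) → ∃ s ≤ n, NReach N s v u := by
    intro m
    induction m with
    | zero =>
      intro a p₂ hl hup q hq1 hqn hqv
      cases p₂ with
      | nil =>
        exfalso
        exact lt_asymm huv (hqv u q.end_mem_support (fun h => hvu h.symm))
      | cons hadj p' => simp [Walk.length_cons] at hl
    | succ m ihm =>
      intro a p₂ hl hup q hq1 hqn hqv
      cases p₂ with
      | nil =>
        exfalso
        exact lt_asymm huv (hqv u q.end_mem_support (fun h => hvu h.symm))
      | cons hadj p' =>
        rename_i b
        by_cases hbv : b < v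
        · have hbN : b ∈ N v := by
            apply hN v b hbv
            apply strongRel_of_walk G L (q.concat hadj)
            intro w hw hwb hwv
            rw [Walk.support_concat] at hw
            rcases List.mem_append.1 hw with h | h
            · exact hqv w h hwv
            · exact absurd (List.mem_singleton.1 h) hwb
          have hp'len : p'.length < n := by
            simp only [Walk.length_cons] at hqn
            omega
          obtain ⟨s', hs', hre⟩ := IH p'.length hp'len b u p' le_rfl
            (fun w hw => hup w (by rw [Walk.support_cons]; exact List.mem_cons_of_mem _ hw))
          refine ⟨s' + 1, ?_, NReach.step hbN hre⟩
          simp only [Walk.length_cons] at hqn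
          omega
        · apply ihm b p' (by simp only [Walk.length_cons] at hl; omega)
            (fun w hw => hup w (by rw [Walk.support_cons]; exact List.mem_cons_of_mem _ hw))
            (q.concat hadj)
          · rw [Walk.length_concat]; omega
          · rw [Walk.length_concat]
            simp only [Walk.length_cons] at hqn
            omega
          · intro w hw hwv
            rw [Walk.support_concat] at hw
            rcases List.mem_append.1 hw with h | h
            · exact hqv w h hwv
            · obtain rfl := List.mem_singleton.1 h
              rcases lt_trichotomy w v with h' | h' | h'
              · exact absurd h' hbv
              · exact absurd h' hwv
              · exact h'
  cases p with
  | nil => exact absurd rfl hvu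
  | cons hadj p' =>
    rename_i b
    by_cases hbv : b < v
    · have hbN : b ∈ N v := by
        apply hN v b hbv
        apply strongRel_of_walk G L (Walk.cons hadj Walk.nil)
        intro w hw hwb hwv
        simp only [Walk.support_cons, Walk.support_nil, List.mem_cons,
          List.not_mem_nil, or_false, List.mem_singleton] at hw
        rcases hw with rfl | rfl
        · exact absurd rfl hwv
        · exact absurd rfl hwb
      have hp'len : p'.length < n := by
        simp only [Walk.length_cons] at hlen
        omega
      obtain ⟨s', hs', hre⟩ := IH p'.length hp'len b u p' le_rfl
        (fun w hw => hmin w (by rw [Walk.support_cons]; exact List.mem_cons_of_mem _ hw))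
      refine ⟨s' + 1, ?_, NReach.step hbN hre⟩
      simp only [Walk.length_cons] at hlen
      omega
    · apply Q p'.length b p' le_rfl
        (fun w hw => hmin w (by rw [Walk.support_cons]; exact List.mem_cons_of_mem _ hw))
        (Walk.cons hadj Walk.nil)
      · simp
      · simp only [Walk.length_cons] at hlen ⊢
        simp
        omega
      · intro w hw hwv
        simp only [Walk.support_cons, Walk.support_nil, List.mem_cons,
          List.not_mem_nil, or_false, List.mem_singleton] at hw
        rcases hw with rfl | rfl
        · exact absurd rfl hwv
        · rcases lt_trichotomy w v with h' | h' | h'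
          · exact absurd h' hbv
          · exact absurd h' hwv
          · exact h'

end AuxGraph


/-- **Theorem (Grohe et al.).** If the elimination width of `L` is at most `k`
(every clique of the fill-in has at most `k+1` vertices), then every vertex
weakly `r`-reaches at most `(r+k).choose k` vertices. -/
theorem wreach_le_of_elimination_width (G : SimpleGraph V) (L : LinearOrder V) (k : ℕ)
    (hk : ∀ s : Finset V, (fillIn G L).IsClique (s : Set V) → s.card ≤ k + 1)
    (r : ℕ) (v : V) :
    (WReach G L r v).ncard ≤ (r + k).choose k := by
  classical
  letI := L
  set N : V → Finset V := fun x => (Set.toFinite {y | y < x ∧ StrongRel G L x y}).toFinset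
    with hNdef
  have hmem : ∀ x y, y ∈ N x ↔ y < x ∧ StrongRel G L x y := by
    intro x y
    rw [hNdef, Set.Finite.mem_toFinset]
    exact Iff.rfl
  have h1 : ∀ x y, y ∈ N x → y < x := fun x y h => ((hmem x y).1 h).1
  have h3 : ∀ x y z, y ∈ N x → z ∈ N x → z < y → z ∈ N y := by
    intro x y z hy hz hzy
    obtain ⟨hyx, hsy⟩ := (hmem x y).1 hy
    obtain ⟨hzx, hsz⟩ := (hmem x z).1 hz
    exact (hmem y z).2 ⟨hzy, strongRel_trans G L hyx hzy hsy hsz⟩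
  have h2 : ∀ x, (N x).card ≤ k := by
    intro x
    have hclique : (fillIn G L).IsClique ((insert x (N x) : Finset V) : Set V) := by
      rw [isClique_iff]
      intro a ha b hb hab
      simp only [Finset.coe_insert, Set.mem_insert_iff, Finset.mem_coe] at ha hb
      rcases ha with rfl | ha
      · rcases hb with rfl | hb
        · exact absurd rfl hab
        · obtain ⟨hba, hsb⟩ := (hmem a b).1 hb
          exact ⟨hab, Or.inr ⟨hba, hsb⟩⟩
      · rcases hb with rfl | hb
        · obtain ⟨hab', hsa⟩ := (hmem b a).1 ha
          exact ⟨hab, Or.inl ⟨hab', hsa⟩⟩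
        · obtain ⟨hax, hsa⟩ := (hmem x a).1 ha
          obtain ⟨hbx, hsb⟩ := (hmem x b).1 hb
          rcases lt_trichotomy a b with h' | h' | h'
          · exact ⟨hab, Or.inl ⟨h', strongRel_trans G L hbx h' hsb hsa⟩⟩
          · exact absurd h' hab
          · exact ⟨hab, Or.inr ⟨h', strongRel_trans G L hax h' hsa hsb⟩⟩
    have hcard := hk _ hclique
    have hx : x ∉ N x := fun h => lt_irrefl x (h1 x x h)
    rw [Finset.card_insert_of_notMem hx] at hcard
    omega
  have hsub : WReach G L r v ⊆ {u | ∃ s ≤ r, NReach N s v u} := by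
    rintro u ⟨p, hp, hlenp, hall⟩
    exact walk_to_nreach G L N (fun x y hlt hs => (hmem x y).2 ⟨hlt, hs⟩) r v u p hlenp hall
  calc (WReach G L r v).ncard ≤ {u | ∃ s ≤ r, NReach N s v u}.ncard :=
        Set.ncard_le_ncard hsub (Set.toFinite _)
    _ ≤ (r + k).choose k := abstract_count N k h2 h3 r v
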